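/- For each p ≥ 2 and i = 2,…,p, let σ_{i,p} ∈ S_{2p} be the product of disjoint transpositions (i,i+1)(i+2,i+3)⋯(i+2(p−i), i+2(p−i)+1). Then the right distributor d'_{1,1,p} ∈ S_{2p} (sending s ↦ 2s−1 for s ≤ p and s ↦ 2(s−p) for s > p) equals the composite σ_{2,p} σ_{3,p} ⋯ σ_{p−1,p} σ_{p,p}. -/

import Mathlib

/-- The permutation `σ_{i,p} = (i,i+1)(i+2,i+3)⋯(i+2(p−i), i+2(p−i)+1)` of `{1,…,2p}`,
a product of disjoint transpositions (viewed as a permutation of `ℕ`, 1-indexed). -/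
def sigmaPerm (p i : ℕ) : Equiv.Perm ℕ :=
  (((List.range (p - i + 1)).map fun j => Equiv.swap (i + 2 * j) (i + 2 * j + 1))).prod

lemma swapProd (i : ℕ) : ∀ n s,
    (((List.range n).map fun j => Equiv.swap (i + 2 * j) (i + 2 * j + 1)).prod) s =
      if i ≤ s ∧ s < i + 2 * n then (if (s - i) % 2 = 0 then s + 1 else s - 1) else s := by
  intro n
  induction n with
  | zero =>
    intro s
    simp only [List.range_zero, List.map_nil, List.prod_nil, Equiv.Perm.one_apply]
    rw [if_neg (by omega)]
  | succ n ih =>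
    intro s
    rw [List.range_succ, List.map_append, List.prod_append]
    simp only [List.map_cons, List.map_nil, List.prod_cons, List.prod_nil, mul_one]
    rw [Equiv.Perm.mul_apply]
    by_cases h1 : s = i + 2 * n
    · subst h1
      rw [Equiv.swap_apply_left, ih]
      split_ifs <;> omega
    · by_cases h2 : s = i + 2 * n + 1
      · subst h2
        rw [Equiv.swap_apply_right, ih]
        split_ifs <;> omega
      · rw [Equiv.swap_apply_of_ne_of_ne h1 h2, ih]
        split_ifs <;> omega

lemma Pform : ∀ k i s, 1 ≤ i →
    (((List.range k).map fun t => sigmaPerm (i + k) (i + 1 + t)).prod) s =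
      if s < i + 1 ∨ i + 2 * k < s then s
      else if s ≤ i + k then 2 * s - i else 2 * (s - (i + k)) + i - 1 := by
  intro k
  induction k with
  | zero => intro i s hi; simp
  | succ k ih =>
    intro i s hi
    rw [List.range_succ_eq_map, List.map_cons, List.prod_cons, Equiv.Perm.mul_apply,
      List.map_map]
    have hfun : ((fun t => sigmaPerm (i + (k + 1)) (i + 1 + t)) ∘ Nat.succ) =
        fun t => sigmaPerm ((i + 1) + k) ((i + 1) + 1 + t) := by
      funext t; simp only [Function.comp_apply]; congr 1 <;> omega
    rw [hfun, ih (i + 1) s (by omega)]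
    show (sigmaPerm (i + (k + 1)) (i + 1 + 0)) _ = _
    rw [sigmaPerm]
    have hn : i + (k + 1) - (i + 1 + 0) + 1 = k + 1 := by omega
    rw [hn, swapProd]
    split_ifs <;> omega

theorem stmt13 (p : ℕ) (hp : 2 ≤ p) :
    ∀ s ∈ Set.Icc 1 (2 * p),
      ((((List.range (p - 1)).map fun t => sigmaPerm p (t + 2))).prod : Equiv.Perm ℕ) s =
        if s ≤ p then 2 * s - 1 else 2 * (s - p) := by
  intro s hs
  obtain ⟨hs1, hs2⟩ := hs
  have key := Pform (p - 1) 1 s (le_refl 1)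
  have hfun : (fun t => sigmaPerm (1 + (p - 1)) (1 + 1 + t)) =
      fun t => sigmaPerm p (t + 2) := by
    funext t; congr 1 <;> omega
  rw [hfun] at key
  rw [key]
  split_ifs <;> omega
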